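/- Let n ≥ 2 and let λ ∈ ℂ with λ^(n+1) = 1, say λ = ξ^r where ξ is a primitive (n+1)-th root of unity. Then the singular points of the hypersurface Z(F_λ) ⊂ ℙ^n are exactly the points (ξ^{i_1} : … : ξ^{i_n} : 1) with i_1 + … + i_n ≡ −r (mod n+1). In particular there are exactly (n+1)^{n−1} singular points. -/
import Mathlib


/-- The Dwork polynomial `F_λ = ∑ x_i^(n+1) - (n+1) λ ∏ x_j` evaluated at `x`. -/
noncomputable def dworkF (n : ℕ) (lam : ℂ) (x : Fin (n + 1) → ℂ) : ℂ :=
  (∑ i, x i ^ (n + 1)) - (n + 1) * lam * ∏ j, x j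

/-- The partial derivative `∂F_λ/∂x_k = (n+1) x_k^n - (n+1) λ ∏_{j≠k} x_j` evaluated at `x`. -/
noncomputable def dworkPartial (n : ℕ) (lam : ℂ) (k : Fin (n + 1)) (x : Fin (n + 1) → ℂ) : ℂ :=
  (n + 1) * x k ^ n - (n + 1) * lam * ∏ j ∈ Finset.univ.erase k, x j

/-- A point of `Z(F_λ)` (given by a vector of homogeneous coordinates) is singular iff all
partial derivatives of `F_λ` vanish there (together with `F_λ` itself). -/
noncomputable def dworkSingular (n : ℕ) (lam : ℂ) (x : Fin (n + 1) → ℂ) : Prop :=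
  dworkF n lam x = 0 ∧ ∀ k : Fin (n + 1), dworkPartial n lam k x = 0

/-- for `λ = ξ^r` with `ξ` a primitive `(n+1)`-th root of unity, the singular
points of `Z(F_λ) ⊂ ℙ^n` are exactly the points `(ξ^{i_1} : … : ξ^{i_n} : 1)` with
`i_1 + … + i_n ≡ -r (mod n+1)`; in particular there are exactly `(n+1)^(n-1)` of them. -/
theorem dwork_singular_points (n : ℕ) (hn : 2 ≤ n) (ξ : ℂ)
    (hξ : IsPrimitiveRoot ξ (n + 1)) (r : ℕ) (lam : ℂ) (hlam : lam = ξ ^ r) :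
    (∀ x : Fin (n + 1) → ℂ, x ≠ 0 → dworkSingular n lam x → x (Fin.last n) ≠ 0) ∧
    (∀ x : Fin (n + 1) → ℂ, x (Fin.last n) = 1 →
      (dworkSingular n lam x ↔
        ∃ i : Fin n → ZMod (n + 1), (∑ j, i j) = -(r : ZMod (n + 1)) ∧
          ∀ j : Fin n, x j.castSucc = ξ ^ (i j).val)) ∧
    Fintype.card {i : Fin n → ZMod (n + 1) // (∑ j, i j) = -(r : ZMod (n + 1))} =
      (n + 1) ^ (n - 1) := by
  subst hlam
  have hNn : (n + 1 : ℂ) ≠ 0 := by exact_mod_cast Nat.succ_ne_zero n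
  have hξ0 : ξ ≠ 0 := hξ.ne_zero (Nat.succ_ne_zero n)
  have hlam0 : ξ ^ r ≠ 0 := pow_ne_zero _ hξ0
  have hn0 : n ≠ 0 := by omega
  have key : ∀ (x : Fin (n + 1) → ℂ) (k : Fin (n + 1)),
      x k * dworkPartial n (ξ ^ r) k x
        = (n + 1) * x k ^ (n + 1) - (n + 1) * ξ ^ r * ∏ j, x j := by
    intro x k
    rw [dworkPartial, mul_sub,
      ← Finset.mul_prod_erase Finset.univ x (Finset.mem_univ k)]
    ring
  have allne : ∀ x : Fin (n + 1) → ℂ, dworkSingular n (ξ ^ r) x →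
      (∃ m, x m ≠ 0) → ∀ k, x k ≠ 0 := by
    rintro x hs ⟨m, hm⟩ k hk
    have hp := hs.2 k
    rw [dworkPartial, hk, zero_pow hn0, mul_zero, zero_sub, neg_eq_zero,
      mul_eq_zero, mul_eq_zero] at hp
    rcases hp with (h | h) | h
    · exact hNn h
    · exact hlam0 h
    · have hmk : m ≠ k := fun h => hm (by rw [h]; exact hk)
      have hpm := hs.2 m
      have hz : ∏ j ∈ Finset.univ.erase m, x j = 0 :=
        Finset.prod_eq_zero (Finset.mem_erase.mpr ⟨Ne.symm hmk, Finset.mem_univ k⟩) hk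
      rw [dworkPartial, hz, mul_zero, sub_zero, mul_eq_zero] at hpm
      rcases hpm with h | h
      · exact hNn h
      · exact hm (pow_eq_zero_iff hn0 |>.mp h)
  refine ⟨?_, ?_, ?_⟩
  · intro x hx hs
    obtain ⟨m, hm⟩ := Function.ne_iff.mp hx
    exact allne x hs ⟨m, hm⟩ (Fin.last n)
  · intro x hlast
    constructor
    · intro hs
      have hne : ∀ k, x k ≠ 0 :=
        allne x hs ⟨Fin.last n, by rw [hlast]; exact one_ne_zero⟩
      have hPk : ∀ k, x k ^ (n + 1) = ξ ^ r * ∏ j, x j := by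
        intro k
        have h2 : x k * dworkPartial n (ξ ^ r) k x = 0 := by rw [hs.2 k, mul_zero]
        rw [key] at h2
        have h3 : (n + 1 : ℂ) * x k ^ (n + 1) = (n + 1) * (ξ ^ r * ∏ j, x j) := by
          linear_combination h2
        exact mul_left_cancel₀ hNn h3
      have hlamP : ξ ^ r * ∏ j, x j = 1 := by
        rw [← hPk (Fin.last n), hlast, one_pow]
      have hroot : ∀ j : Fin n, x j.castSucc ^ (n + 1) = 1 := fun j => by
        rw [hPk, hlamP]
      choose e he1 he2 using fun j => hξ.eq_pow_of_pow_eq_one (hroot j)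
      refine ⟨fun j => (e j : ZMod (n + 1)), ?_, ?_⟩
      · have hP : (∏ j, x j) = ξ ^ (∑ j, e j) := by
          rw [Fin.prod_univ_castSucc, hlast, mul_one,
            Finset.prod_congr rfl (fun j _ => (he2 j).symm),
            Finset.prod_pow_eq_pow_sum]
        have h1 : ξ ^ (r + ∑ j, e j) = 1 := by rw [pow_add, ← hP, hlamP]
        have h2 : ((r + ∑ j, e j : ℕ) : ZMod (n + 1)) = 0 :=
          (ZMod.natCast_eq_zero_iff _ _).mpr ((hξ.pow_eq_one_iff_dvd _).mp h1)
        push_cast at h2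
        linear_combination h2
      · intro j
        rw [← he2 j]
        congr 1
        exact (ZMod.val_cast_of_lt (he1 j)).symm
    · rintro ⟨i, hsum, hxi⟩
      have hx1 : ∀ k : Fin (n + 1), x k ^ (n + 1) = 1 := by
        intro k
        refine Fin.lastCases ?_ ?_ k
        · rw [hlast, one_pow]
        · intro j
          rw [hxi j, ← pow_mul, mul_comm, pow_mul, hξ.pow_eq_one, one_pow]
      have hP : ξ ^ r * ∏ j, x j = 1 := by
        rw [Fin.prod_univ_castSucc, hlast, mul_one,
          Finset.prod_congr rfl (fun j _ => hxi j),
          Finset.prod_pow_eq_pow_sum, ← pow_add, hξ.pow_eq_one_iff_dvd,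
          ← ZMod.natCast_eq_zero_iff]
        push_cast
        have : ∀ j : Fin n, (((i j).val : ℕ) : ZMod (n + 1)) = i j := fun j =>
          ZMod.natCast_zmod_val (i j)
        rw [Finset.sum_congr rfl (fun j _ => this j), hsum]
        ring
      constructor
      · rw [dworkF, Finset.sum_congr rfl (fun k _ => hx1 k), Finset.sum_const,
          mul_assoc, hP, mul_one]
        simp
      · intro k
        have hk0 : x k ≠ 0 := fun h => by
          have := hx1 k; rw [h, zero_pow (Nat.succ_ne_zero n)] at this
          exact zero_ne_one this
        have h2 : x k * dworkPartial n (ξ ^ r) k x = 0 := by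
          rw [key, hx1 k, mul_one, mul_assoc, hP, mul_one, sub_self]
        exact (mul_eq_zero.mp h2).resolve_left hk0
  · obtain ⟨m, rfl⟩ : ∃ m, n = m + 1 := ⟨n - 1, by omega⟩
    have e : {i : Fin (m + 1) → ZMod (m + 1 + 1) //
        (∑ j, i j) = -(r : ZMod (m + 1 + 1))} ≃ (Fin m → ZMod (m + 1 + 1)) :=
      { toFun := fun i j => i.1 j.castSucc
        invFun := fun f => ⟨Fin.snoc f (-(r : ZMod (m + 1 + 1)) - ∑ j, f j), by
          rw [Fin.sum_univ_castSucc]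
          simp⟩
        left_inv := fun i => by
          apply Subtype.ext
          funext j
          refine Fin.lastCases ?_ ?_ j
          · have h := i.2
            rw [Fin.sum_univ_castSucc] at h
            simp only [Fin.snoc_last]
            linear_combination -h
          · intro j
            simp
        right_inv := fun f => by funext j; simp }
    rw [Fintype.card_congr e]
    simp [ZMod.card]
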